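/- If L is a semimodular lattice of finite length, then for all x, y ∈ L the graph-theoretic distance between x and y in the covering (Hasse) graph of L equals length([x, x∨y]) + length([y, x∨y]). -/

import Mathlib

/-- The equivalence relation on `A` whose only non-singleton block is `{a, b}`. -/
def equ {A : Type*} (a b : A) : Setoid A :=
  Relation.EqvGen.setoid (fun x y => x = a ∧ y = b)

/-- A subset `G` of a lattice generates it if the smallest sublattice containing `G`
(the lattice closure of `G`) is everything. -/
def Generates {L : Type*} [Lattice L] (G : Set L) : Prop :=
  latticeClosure G = Set.univ

section Semimodular

variable {L : Type*} [Lattice L]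

/-- A saturated chain from `a` to `b` with `k` covering steps. -/
def SatChain (f : ℕ → L) (k : ℕ) (a b : L) : Prop :=
  f 0 = a ∧ f k = b ∧ ∀ i < k, f i ⋖ f (i + 1)

lemma SatChain.mono {f : ℕ → L} {k : ℕ} {a b : L} (h : SatChain f k a b)
    {i j : ℕ} (hij : i ≤ j) (hj : j ≤ k) : f i ≤ f j := by
  induction j with
  | zero => simp_all
  | succ n IH =>
    rcases Nat.lt_or_ge i (n+1) with h'|h'
    · exact le_trans (IH (by omega) (by omega)) (h.2.2 n (by omega)).le
    · have : i = n + 1 := by omega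
      simp [this]

lemma SatChain.le {f : ℕ → L} {k : ℕ} {a b : L} (h : SatChain f k a b) : a ≤ b := by
  have := h.mono (Nat.zero_le k) le_rfl
  rwa [h.1, h.2.1] at this

lemma SatChain.mem_Icc {f : ℕ → L} {k : ℕ} {a b : L} (h : SatChain f k a b)
    {i : ℕ} (hi : i ≤ k) : f i ∈ Set.Icc a b := by
  constructor
  · have := h.mono (Nat.zero_le i) hi; rwa [h.1] at this
  · have := h.mono hi le_rfl; rwa [h.2.1] at this

lemma chainHeight_insert_ge {S : Set L} {a : L} (ha : ∀ z ∈ S, a < z ∨ z < a) :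
    S.chainHeight (· < ·) + 1 ≤ (insert a S).chainHeight (· < ·) := by
  haveI : Nonempty {t : Set L // t ⊆ S ∧ IsChain (· < ·) t} := ⟨⟨∅, by simp, by simp⟩⟩
  rw [Set.chainHeight_eq_iSup, ENat.iSup_add]
  refine iSup_le fun t => ?_
  have hat : a ∉ t.1 := fun h => (ha a (t.2.1 h)).elim (lt_irrefl a) (lt_irrefl a)
  rw [← Set.encard_insert_of_notMem hat]
  refine Set.encard_le_chainHeight_of_isChain _ _ (Set.insert_subset_insert t.2.1) ?_
  exact t.2.2.insert fun b hb _ => ha b (t.2.1 hb)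

lemma list_pairwise_isChain (l : List L) (hl : l.Pairwise (· < ·)) :
    IsChain (· < ·) {x | x ∈ l} ∧ ({x | x ∈ l} : Set L).encard = l.length := by
  induction l with
  | nil => simp
  | cons c r ih =>
    obtain ⟨h1, h2⟩ := List.pairwise_cons.1 hl
    have ih' := ih h2
    have hset : {x | x ∈ c :: r} = insert c {x | x ∈ r} := by ext; simp
    have hc : c ∉ {x | x ∈ r} := fun h => lt_irrefl c (h1 c h)
    rw [hset]
    refine ⟨ih'.1.insert (fun b hb _ => Or.inl (h1 b hb)), ?_⟩
    rw [Set.encard_insert_of_notMem hc, ih'.2]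
    simp

lemma le_chainHeight_of_list {S : Set L} (l : List L) (hl : l.IsChain (· < ·))
    (hm : ∀ c ∈ l, c ∈ S) : (l.length : ℕ∞) ≤ S.chainHeight (· < ·) := by
  have h := list_pairwise_isChain l (List.isChain_iff_pairwise.1 hl)
  rw [← h.2]
  exact Set.encard_le_chainHeight_of_isChain _ _ (fun x hx => hm x hx) h.1

lemma exists_list_of_isChain (n : ℕ) : ∀ {t : Set L}, IsChain (· < ·) t → t.encard = n →
    ∃ l : List L, l.Pairwise (· < ·) ∧ (∀ c ∈ l, c ∈ t) ∧ l.length = n := by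
  induction n with
  | zero => intro t _ _; exact ⟨[], by simp, by simp, rfl⟩
  | succ n ih =>
    intro t htc hte
    have hfin : t.Finite := Set.finite_of_encard_eq_coe hte
    have hne : t.Nonempty := Set.nonempty_of_encard_ne_zero (by rw [hte]; simp)
    obtain ⟨m, hm⟩ := hfin.exists_minimal hne
    have he : (t \ {m}).encard = n := by
      rw [Set.encard_diff_singleton_of_mem hm.1, hte,
        show (1 : ℕ∞) = ((1 : ℕ) : ℕ∞) from by norm_num, ← ENat.coe_sub]
      simp
    obtain ⟨l, hlp, hlm, hll⟩ := ih (htc.mono Set.diff_subset) he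
    refine ⟨m :: l, List.pairwise_cons.2 ⟨fun b hb => ?_, hlp⟩, ?_, by simp [hll]⟩
    · have hb' := hlm b hb
      have hbm : b ≠ m := fun h => hb'.2 (by simp [h])
      rcases htc hm.1 hb'.1 (Ne.symm hbm) with h | h
      · exact h
      · exact absurd (hm.2 hb'.1 h.le) h.not_ge
    · intro c hc
      rcases List.mem_cons.1 hc with rfl | hc
      · exact hm.1
      · exact (hlm c hc).1

lemma chainHeight_singleton' (a : L) : ({a} : Set L).chainHeight (· < ·) = 1 := by
  have : ({a} : Set L) = insert a ∅ := by simp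
  rw [← Set.encard_eq_chainHeight_of_isChain ({a} : Set L) (fun x hx y hy hne =>
    absurd ((Set.mem_singleton_iff.1 hx).trans (Set.mem_singleton_iff.1 hy).symm) hne)]
  simp

lemma SatChain.le_chainHeight {f : ℕ → L} {k : ℕ} {a b : L} (h : SatChain f k a b) :
    ((k : ℕ∞) + 1) ≤ (Set.Icc a b).chainHeight (· < ·) := by
  have : ((k + 1 : ℕ) : ℕ∞) ≤ (Set.Icc a b).chainHeight (· < ·) := by
    have H := le_chainHeight_of_list (S := Set.Icc a b) ((List.range (k+1)).map f) ?_ ?_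
    · simpa using H
    · rw [List.isChain_map, List.isChain_range_succ]
      intro m hm
      exact (h.2.2 m hm).lt
    · intro c hc
      simp only [List.mem_map, List.mem_range] at hc
      obtain ⟨i, hi, rfl⟩ := hc
      exact h.mem_Icc (by omega)
  simpa [Nat.cast_add] using this

lemma SatChain.prepend {f : ℕ → L} {k : ℕ} {a b u : L} (h : SatChain f k a b)
    (hu : u ⋖ a) : SatChain (fun i => if i = 0 then u else f (i - 1)) (k + 1) u b := by
  refine ⟨by simp, by simp [h.2.1], fun i hi => ?_⟩
  rcases Nat.eq_zero_or_pos i with rfl | hpos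
  · simpa [h.1] using hu
  · have h2 : ¬ (i + 1 = 0) := by omega
    have h3 : ¬ (i = 0) := by omega
    simp only [h2, h3, if_false]
    have : i - 1 + 1 = i + 1 - 1 := by omega
    rw [← this]
    exact h.2.2 (i - 1) (by omega)

lemma SatChain.append {f : ℕ → L} {k : ℕ} {a b w : L} (h : SatChain f k a b)
    (hw : b ⋖ w) : SatChain (fun i => if i = k + 1 then w else f i) (k + 1) a w := by
  refine ⟨by simp [h.1], by simp, fun i hi => ?_⟩
  rcases Nat.lt_or_ge i k with h'|h'
  · have h2 : ¬ (i = k + 1) := by omega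
    have h3 : ¬ (i + 1 = k + 1) := by omega
    simp only [h2, h3, if_false]
    exact h.2.2 i h'
  · have : i = k := by omega
    subst this
    have h2 : ¬ (i = i + 1) := by omega
    simp only [h2, if_false, if_pos rfl]
    rwa [h.2.1]

lemma wf_of_fl (hfl : (Set.univ : Set L).chainHeight (· < ·) ≠ ⊤) :
    WellFoundedLT L := by
  obtain ⟨N, hN⟩ := ENat.ne_top_iff_exists.1 hfl
  have key : ∀ n : ℕ, ∀ a : L, (Set.Iic a).chainHeight (· < ·) ≤ n → Acc (· < ·) a := by
    intro n
    induction n with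
    | zero =>
      intro a h
      exfalso
      have := Set.chainHeight_mono (r := (· < ·)) {a} (Set.Iic a) (by simp)
      rw [chainHeight_singleton'] at this
      exact absurd (le_trans this h) (by simp)
    | succ n IH =>
      intro a h
      refine Acc.intro a fun b hb => IH b ?_
      have h1 := chainHeight_insert_ge (S := Set.Iic b) (a := a)
        (fun z hz => Or.inr (lt_of_le_of_lt hz hb))
      have h2 : insert a (Set.Iic b) ⊆ Set.Iic a :=
        Set.insert_subset le_rfl (fun z hz => le_trans hz hb.le)
      have h3 := le_trans h1 (le_trans (Set.chainHeight_mono _ _ _ h2) h)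
      have h4 : ((Set.Iic b).chainHeight (· < ·)) + 1 ≤ (n : ℕ∞) + 1 := by exact_mod_cast h3
      exact (ENat.add_le_add_iff_right (k := 1) (by simp)).mp h4
  exact ⟨⟨fun a => key N a (le_trans (Set.chainHeight_mono _ _ _ (Set.subset_univ _)) hN.ge)⟩⟩

/-- Existence of saturated chains in a finite-length lattice. -/
lemma exists_satChain (hfl : (Set.univ : Set L).chainHeight (· < ·) ≠ ⊤) {a b : L} (hab : a ≤ b) :
    ∃ (k : ℕ) (f : ℕ → L), SatChain f k a b := by
  have hwf := wf_of_fl hfl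
  obtain ⟨N, hN⟩ := ENat.ne_top_iff_exists.1 hfl
  have key : ∀ n : ℕ, ∀ a b : L, a ≤ b → (Set.Icc a b).chainHeight (· < ·) ≤ n →
      ∃ (k : ℕ) (f : ℕ → L), SatChain f k a b := by
    intro n
    induction n with
    | zero =>
      intro a b hab h
      exfalso
      have : (Set.Icc a b) = ∅ := by
        rw [← Set.chainHeight_eq_zero_iff (r := (· < ·))]
        exact le_antisymm (by simpa using h) zero_le
      exact absurd (Set.mem_Icc.2 ⟨le_rfl, hab⟩) (by simp [this])
    | succ n IH =>
      intro a b hab h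
      rcases eq_or_lt_of_le hab with rfl | hlt
      · exact ⟨0, fun _ => a, rfl, rfl, by omega⟩
      · obtain ⟨y, hy, hymin⟩ := hwf.wf.has_min {z | a < z ∧ z ≤ b} ⟨b, hlt, le_rfl⟩
        have hay : a ⋖ y := ⟨hy.1, fun w hw hwy => hymin w ⟨hw, le_trans hwy.le hy.2⟩ hwy⟩
        have hsub : insert a (Set.Icc y b) ⊆ Set.Icc a b := by
          intro z hz
          rcases hz with rfl | hz
          · exact ⟨le_rfl, hab⟩
          · exact ⟨le_trans hay.le hz.1, hz.2⟩
        have hins : (Set.Icc y b).chainHeight (· < ·) + 1 ≤ (insert a (Set.Icc y b)).chainHeight (· < ·) :=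
          chainHeight_insert_ge (fun z hz => Or.inl (lt_of_lt_of_le hay.lt hz.1))
        have hle : (Set.Icc y b).chainHeight (· < ·) + 1 ≤ (n : ℕ∞) + 1 := by
          refine le_trans hins ?_
          exact le_trans (Set.chainHeight_mono _ _ _ hsub) (by exact_mod_cast h)
        have hle' : (Set.Icc y b).chainHeight (· < ·) ≤ n :=
          (ENat.add_le_add_iff_right (by simp)).mp hle
        obtain ⟨k, f, hf⟩ := IH y b hy.2 hle'
        exact ⟨k + 1, _, hf.prepend hay⟩
  refine key N a b hab ?_
  exact le_trans (Set.chainHeight_mono _ _ _ (Set.subset_univ _)) (by exact_mod_cast hN.ge)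

lemma cov_sup (hsm : ∀ a b : L, a ⊓ b ⋖ a → b ⋖ a ⊔ b)
    {a x c : L} (hax : a ⋖ x) (hac : a ≤ c) (hxc : ¬ x ≤ c) : c ⋖ c ⊔ x := by
  have h1 : x ⊓ c = a := by
    rcases hax.eq_or_eq (c := x ⊓ c) (le_inf hax.le hac) inf_le_left with h | h
    · exact h
    · exact absurd (h ▸ inf_le_right) hxc
  have := hsm x c (by rw [h1]; exact hax)
  rwa [sup_comm] at this

/-- Pushing a chain in `[a,b]` up into `[x,b]` when `a ⋖ x`, losing at most one element. -/
lemma dmap (hsm : ∀ a b : L, a ⊓ b ⋖ a → b ⋖ a ⊔ b)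
    {a x b : L} (hax : a ⋖ x) (hxb : x ≤ b) :
    ∀ l : List L, l.IsChain (· < ·) → (∀ c ∈ l, c ∈ Set.Icc a b) →
    ∃ l' : List L, l'.IsChain (· < ·) ∧ (∀ c ∈ l', c ∈ Set.Icc x b) ∧
      l.length ≤ l'.length + 1 ∧
      (∀ c0 ∈ l.head?, ∃ d0 ∈ l'.head?, c0 ⊔ x ≤ d0) := by
  intro l
  induction l with
  | nil => exact fun _ _ => ⟨[], by simp, by simp, by simp, by simp⟩
  | cons c0 rest IH =>
    intro hch hmem
    have hc0ab : c0 ∈ Set.Icc a b := hmem c0 List.mem_cons_self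
    by_cases hx0 : x ≤ c0
    · -- the whole list already lives in [x, b]
      refine ⟨c0 :: rest, hch, ?_, by simp, ?_⟩
      · intro c hc
        refine ⟨?_, (hmem c hc).2⟩
        rcases List.mem_cons.1 hc with rfl | hc'
        · exact hx0
        · have := (List.pairwise_cons.1 (List.isChain_iff_pairwise.1 hch)).1 c hc'
          exact le_trans hx0 this.le
      · intro z hz
        simp only [List.head?_cons, Option.mem_some_iff] at hz
        subst hz
        exact ⟨c0, by simp, sup_le le_rfl hx0⟩
    · have hcov : c0 ⋖ c0 ⊔ x := cov_sup hsm hax hc0ab.1 hx0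
      have hd0b : c0 ⊔ x ≤ b := sup_le hc0ab.2 hxb
      cases rest with
      | nil =>
        refine ⟨[c0 ⊔ x], by simp, ?_, by simp, ?_⟩
        · intro c hc
          simp only [List.mem_singleton] at hc
          subst hc
          exact ⟨le_sup_right, hd0b⟩
        · intro z hz
          simp only [List.head?_cons, Option.mem_some_iff] at hz
          subst hz
          exact ⟨c0 ⊔ x, by simp, le_rfl⟩
      | cons c1 rest2 =>
        obtain ⟨l'', hch'', hmem'', hlen'', hhead''⟩ :=
          IH (List.IsChain.tail hch) (fun c hc => hmem c (List.mem_cons_of_mem _ hc))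
        obtain ⟨d1, hd1, hc1d1⟩ := hhead'' c1 (by simp)
        have hc01 : c0 < c1 := List.isChain_cons_cons.1 hch |>.1
        have hd01 : c0 ⊔ x ≤ d1 := le_trans (sup_le_sup_right hc01.le x) hc1d1
        rcases eq_or_lt_of_le hd01 with heq | hlt
        · -- collapse: c1 = c0 ⊔ x, so the tail already lives in [x,b]
          have hc1le : c1 ≤ c0 ⊔ x := by rw [heq]; exact le_trans le_sup_left hc1d1
          have hc1eq : c1 = c0 ⊔ x := by
            rcases hcov.eq_or_eq (le_of_lt hc01) hc1le with h | h
            · exact absurd h (ne_of_gt hc01)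
            · exact h
          refine ⟨c1 :: rest2, (List.isChain_cons_cons.1 hch).2, ?_, by simp, ?_⟩
          · intro c hc
            refine ⟨?_, (hmem c (List.mem_cons_of_mem _ hc)).2⟩
            rcases List.mem_cons.1 hc with rfl | hc'
            · rw [hc1eq]; exact le_sup_right
            · have := (List.pairwise_cons.1 (List.isChain_iff_pairwise.1
                ((List.isChain_cons_cons.1 hch).2))).1 c hc'
              exact le_trans (hc1eq ▸ le_sup_right) this.le
          · intro z hz
            simp only [List.head?_cons, Option.mem_some_iff] at hz
            subst hz
            exact ⟨c1, by simp, hc1eq ▸ le_rfl⟩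
        · -- no collapse: prepend c0 ⊔ x
          obtain ⟨t'', rfl⟩ : ∃ t'', l'' = d1 :: t'' := by
            cases l'' with
            | nil => simp at hd1
            | cons h t =>
              simp only [List.head?_cons, Option.mem_some_iff] at hd1
              exact ⟨t, by rw [hd1]⟩
          refine ⟨(c0 ⊔ x) :: d1 :: t'', List.isChain_cons_cons.2 ⟨hlt, hch''⟩, ?_, ?_, ?_⟩
          · intro c hc
            rcases List.mem_cons.1 hc with rfl | hc'
            · exact ⟨le_sup_right, hd0b⟩
            · exact hmem'' c hc'
          · simpa using Nat.succ_le_succ hlen''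
          · intro z hz
            simp only [List.head?_cons, Option.mem_some_iff] at hz
            subst hz
            exact ⟨c0 ⊔ x, by simp, le_rfl⟩

/-- Jordan–Hölder upper bound : the interval height is at most the length of any
saturated chain. -/
lemma chainHeight_le_of_satChain (hsm : ∀ a b : L, a ⊓ b ⋖ a → b ⋖ a ⊔ b) :
    ∀ (k : ℕ) {a b : L} {f : ℕ → L}, SatChain f k a b →
      (Set.Icc a b).chainHeight (· < ·) ≤ (k : ℕ∞) + 1 := by
  intro k
  induction k with
  | zero =>
    intro a b f h
    have hba : b = a := by rw [← h.1, ← h.2.1]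
    subst hba
    rw [Set.Icc_self, chainHeight_singleton']
    simp
  | succ k IH =>
    intro a b f h
    have hax : a ⋖ f 1 := by simpa [h.1] using (h.2.2 0 (by omega))
    have hg : SatChain (fun i => f (i + 1)) k (f 1) b := by
      refine ⟨rfl, h.2.1, fun i hi => h.2.2 (i+1) (by omega)⟩
    have hxb : f 1 ≤ b := hg.le
    by_contra hcon
    push_neg at hcon
    have h3 : ((k + 3 : ℕ) : ℕ∞) ≤ (Set.Icc a b).chainHeight (· < ·) := by
      have := Order.add_one_le_of_lt hcon
      have heq : ((k : ℕ∞) + 1) + 1 + 1 = ((k + 3 : ℕ) : ℕ∞) := by push_cast; ring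
      rw [← heq]
      exact this
    obtain ⟨t, hts, hte, htc⟩ := Set.exists_isChain_of_le_chainHeight _ h3
    obtain ⟨l, hlp, hlm, hlen⟩ := exists_list_of_isChain _ htc hte
    have hl : l.IsChain (· < ·) ∧ ∀ c ∈ l, c ∈ Set.Icc a b :=
      ⟨List.isChain_iff_pairwise.2 hlp, fun c hc => hts (hlm c hc)⟩
    obtain ⟨l', hch', hmem', hlen', -⟩ := dmap hsm hax hxb l hl.1 hl.2
    have : ((k + 2 : ℕ) : ℕ∞) ≤ (Set.Icc (f 1) b).chainHeight (· < ·) := by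
      have hge : k + 2 ≤ l'.length := by omega
      exact le_trans (by exact_mod_cast hge)
        (le_chainHeight_of_list l' hch' hmem')
    have hIH := IH hg
    have : ((k + 2 : ℕ) : ℕ∞) ≤ ((k + 1 : ℕ) : ℕ∞) := by
      refine le_trans this (le_trans hIH ?_)
      push_cast
      exact le_rfl
    exact absurd (by exact_mod_cast this) (by omega)

/-- Jordan–Hölder: the interval height is exactly one more than the length of any
saturated chain. -/
lemma satChain_chainHeight (hsm : ∀ a b : L, a ⊓ b ⋖ a → b ⋖ a ⊔ b)
    {k : ℕ} {a b : L} {f : ℕ → L} (h : SatChain f k a b) :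
    (Set.Icc a b).chainHeight (· < ·) = (k : ℕ∞) + 1 :=
  le_antisymm (chainHeight_le_of_satChain hsm k h) h.le_chainHeight

end Semimodular

section Main

variable {L : Type*} [Lattice L]

lemma enat_add_one_sub_one (n : ℕ) : ((n : ℕ∞) + 1) - 1 = (n : ℕ∞) := by
  have h : ((n : ℕ∞) + 1) = ((n + 1 : ℕ) : ℕ∞) := by push_cast; ring
  rw [h, show (1 : ℕ∞) = ((1 : ℕ) : ℕ∞) from by norm_num, ← ENat.coe_sub]
  norm_num

lemma phi_step (hsm : ∀ a b : L, a ⊓ b ⋖ a → b ⋖ a ⊔ b)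
    (hfl : (Set.univ : Set L).chainHeight (· < ·) ≠ ⊤) (y : L) {u v : L} (huv : u ⋖ v) :
    (((Set.Icc u (u ⊔ y)).chainHeight (· < ·) - 1) + ((Set.Icc y (u ⊔ y)).chainHeight (· < ·) - 1) ≤
      ((Set.Icc v (v ⊔ y)).chainHeight (· < ·) - 1) + ((Set.Icc y (v ⊔ y)).chainHeight (· < ·) - 1) + 1)
    ∧ (((Set.Icc v (v ⊔ y)).chainHeight (· < ·) - 1) + ((Set.Icc y (v ⊔ y)).chainHeight (· < ·) - 1) ≤
      ((Set.Icc u (u ⊔ y)).chainHeight (· < ·) - 1) + ((Set.Icc y (u ⊔ y)).chainHeight (· < ·) - 1) + 1) := by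
  by_cases hv : v ≤ u ⊔ y
  · have hw : v ⊔ y = u ⊔ y := le_antisymm (sup_le hv le_sup_right) (sup_le_sup_right huv.le y)
    obtain ⟨k, g, hg⟩ := exists_satChain hfl hv
    have cV := satChain_chainHeight hsm hg
    have cU := satChain_chainHeight hsm (hg.prepend huv)
    obtain ⟨k3, g3, hg3⟩ := exists_satChain hfl (le_sup_right : y ≤ u ⊔ y)
    have cY := satChain_chainHeight hsm hg3
    rw [hw, cV, cU, cY]
    simp only [enat_add_one_sub_one]
    constructor
    · have h : (k + 1) + k3 ≤ (k + k3) + 1 := by omega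
      exact_mod_cast h
    · have h : k + k3 ≤ ((k + 1) + k3) + 1 := by omega
      exact_mod_cast h
  · have hww : (u ⊔ y) ⊔ v = v ⊔ y := by
      apply le_antisymm
      · exact sup_le (sup_le (le_trans huv.le le_sup_left) le_sup_right) le_sup_left
      · exact sup_le le_sup_right (le_trans le_sup_right le_sup_left)
    have hw' : (u ⊔ y) ⋖ v ⊔ y := hww ▸ cov_sup hsm huv le_sup_left hv
    obtain ⟨k', gU, hgU⟩ := exists_satChain hfl (le_sup_left : u ≤ u ⊔ y)
    have cUW := satChain_chainHeight hsm hgU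
    have cUW' := satChain_chainHeight hsm (hgU.append hw')
    obtain ⟨k'', gV, hgV⟩ := exists_satChain hfl (le_sup_left : v ≤ v ⊔ y)
    have cVW' := satChain_chainHeight hsm hgV
    have cUW'2 := satChain_chainHeight hsm (hgV.prepend huv)
    have hkk : k'' = k' := by
      have h := cUW'.symm.trans cUW'2
      have h' : k' + 1 + 1 = k'' + 1 + 1 := by exact_mod_cast h
      omega
    obtain ⟨k, gY, hgY⟩ := exists_satChain hfl (le_sup_right : y ≤ u ⊔ y)
    have cYW := satChain_chainHeight hsm hgY
    have cYW' := satChain_chainHeight hsm (hgY.append hw')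
    rw [cUW, cYW, cVW', cYW', hkk]
    simp only [enat_add_one_sub_one]
    constructor
    · have h : k' + k ≤ (k' + (k + 1)) + 1 := by omega
      exact_mod_cast h
    · have h : k' + (k + 1) ≤ (k' + k) + 1 := by omega
      exact_mod_cast h

lemma phi_le_path (hsm : ∀ a b : L, a ⊓ b ⋖ a → b ⋖ a ⊔ b)
    (hfl : (Set.univ : Set L).chainHeight (· < ·) ≠ ⊤) {y : L} {m : ℕ} {f : ℕ → L} (hfm : f m = y)
    (hstep : ∀ i < m, f i ⋖ f (i+1) ∨ f (i+1) ⋖ f i) :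
    ∀ j ≤ m, ((Set.Icc (f (m - j)) (f (m - j) ⊔ y)).chainHeight (· < ·) - 1)
      + ((Set.Icc y (f (m - j) ⊔ y)).chainHeight (· < ·) - 1) ≤ (j : ℕ∞) := by
  intro j
  induction j with
  | zero =>
    intro _
    simp only [Nat.sub_zero, hfm, sup_idem, Set.Icc_self, chainHeight_singleton']
    simp
  | succ j IH =>
    intro hj
    have hmj : m - j = (m - (j+1)) + 1 := by omega
    have hcov := hstep (m - (j+1)) (by omega)
    have IH' := IH (by omega)
    rw [hmj] at IH'
    have hcast : ((j + 1 : ℕ) : ℕ∞) = (j : ℕ∞) + 1 := by push_cast; ring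
    rw [hcast]
    rcases hcov with h | h
    · exact le_trans (phi_step hsm hfl y h).1 (add_le_add_left IH' 1)
    · exact le_trans (phi_step hsm hfl y h).2 (add_le_add_left IH' 1)

end Main

/-- In a semimodular lattice of finite length, the distance of x and y in the covering graph
is length([x, x⊔y]) + length([y, x⊔y]). -/
theorem semimodular_distance {L : Type*} [Lattice L]
    (hsm : ∀ a b : L, a ⊓ b ⋖ a → b ⋖ a ⊔ b)
    (hfl : (Set.univ : Set L).chainHeight (· < ·) ≠ ⊤)
    (x y : L) :
    ((sInf {k : ℕ | ∃ f : ℕ → L, f 0 = x ∧ f k = y ∧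
        ∀ i < k, f i ⋖ f (i + 1) ∨ f (i + 1) ⋖ f i} : ℕ) : ℕ∞) =
      ((Set.Icc x (x ⊔ y)).chainHeight (· < ·) - 1) + ((Set.Icc y (x ⊔ y)).chainHeight (· < ·) - 1) := by
  obtain ⟨k1, f1, hf1⟩ := exists_satChain hfl (le_sup_left : x ≤ x ⊔ y)
  obtain ⟨k2, f2, hf2⟩ := exists_satChain hfl (le_sup_right : y ≤ x ⊔ y)
  have h1 := satChain_chainHeight hsm hf1
  have h2 := satChain_chainHeight hsm hf2
  have hmem : k1 + k2 ∈ {k : ℕ | ∃ f : ℕ → L, f 0 = x ∧ f k = y ∧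
      ∀ i < k, f i ⋖ f (i + 1) ∨ f (i + 1) ⋖ f i} := by
    refine ⟨fun i => if i ≤ k1 then f1 i else f2 (k1 + k2 - i), by simp [hf1.1], ?_, ?_⟩
    · beta_reduce
      by_cases h : k1 + k2 ≤ k1
      · have hk2 : k2 = 0 := by omega
        rw [if_pos h]
        have hf20 : f2 0 = x ⊔ y := by rw [← hk2]; exact hf2.2.1
        have hyt : y = x ⊔ y := by rw [← hf20, hf2.1]
        have : k1 + k2 = k1 := by omega
        rw [this, hf1.2.1, ← hyt]
      · rw [if_neg h, Nat.sub_self]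
        exact hf2.1
    · intro i hi
      beta_reduce
      by_cases h1i : i + 1 ≤ k1
      · have h0 : i ≤ k1 := by omega
        rw [if_pos h0, if_pos h1i]
        exact Or.inl (hf1.2.2 i (by omega))
      · by_cases h0 : i ≤ k1
        · have hik : i = k1 := by omega
          have hk2 : 1 ≤ k2 := by omega
          rw [if_pos h0, if_neg h1i]
          right
          have e1 : k1 + k2 - (i + 1) = k2 - 1 := by omega
          rw [e1]
          have hcv := hf2.2.2 (k2 - 1) (by omega)
          have e2 : k2 - 1 + 1 = k2 := by omega
          rw [e2] at hcv
          rw [hik, hf1.2.1, ← hf2.2.1]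
          exact hcv
        · rw [if_neg h0, if_neg (by omega : ¬ i + 1 ≤ k1)]
          right
          have e1 : k1 + k2 - (i + 1) + 1 = k1 + k2 - i := by omega
          have hcv := hf2.2.2 (k1 + k2 - (i + 1)) (by omega)
          rwa [e1] at hcv
  have hlow : ∀ m ∈ {k : ℕ | ∃ f : ℕ → L, f 0 = x ∧ f k = y ∧
      ∀ i < k, f i ⋖ f (i + 1) ∨ f (i + 1) ⋖ f i}, k1 + k2 ≤ m := by
    rintro m ⟨f, hf0, hfm, hstep⟩
    have key := phi_le_path hsm hfl hfm hstep m le_rfl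
    rw [Nat.sub_self, hf0, h1, h2] at key
    simp only [enat_add_one_sub_one] at key
    have : ((k1 + k2 : ℕ) : ℕ∞) ≤ (m : ℕ∞) := by push_cast; exact key
    exact_mod_cast this
  have hinf : sInf {k : ℕ | ∃ f : ℕ → L, f 0 = x ∧ f k = y ∧
      ∀ i < k, f i ⋖ f (i + 1) ∨ f (i + 1) ⋖ f i} = k1 + k2 :=
    le_antisymm (Nat.sInf_le hmem) (le_csInf ⟨_, hmem⟩ hlow)
  rw [hinf, h1, h2]
  simp only [enat_add_one_sub_one]
  push_cast
  ring
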